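/- Let (X, f_{1,∞}) be a nonautonomous system and K a nonempty f_{1,∞}-invariant subset (f_i⁻¹(K) = K for all i ≥ 1). Then for any 1 ≤ i ≤ j, the upper entropy dimensions of the shifted systems satisfy D̄_K(f_{i,∞}) ≤ D̄_K(f_{j,∞}), where f_{i,∞} = {f_i, f_{i+1}, …}. More precisely, for every s > 0, h̄_K(f_{i,∞}, s) ≤ h̄_K(f_{i+1,∞}, s). -/

import Mathlib

open Filter Set Topology
open scoped ENNReal NNReal

noncomputable section

/-- `comps f i n` is the composition `f_i^n = f_{i+n-1} ∘ ⋯ ∘ f_i` (indices from 1). -/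
def comps {X : Type*} (f : ℕ → X → X) (i : ℕ) : ℕ → X → X
  | 0 => id
  | n + 1 => f (i + n) ∘ comps f i n

/-- Minimal cardinality (in `ℕ∞`) of a subfamily of `U` covering `K`. -/
def coverNumOn {X : Type*} (K : Set X) (U : Set (Set X)) : ℕ∞ :=
  sInf {n : ℕ∞ | ∃ F ⊆ U, F.Finite ∧ (F.ncard : ℕ∞) = n ∧ K ⊆ ⋃₀ F}

/-- `U` is a finite open cover of the whole space. -/
def IsFiniteOpenCover {X : Type*} [TopologicalSpace X] (U : Set (Set X)) : Prop :=
  U.Finite ∧ (∀ u ∈ U, IsOpen u) ∧ ⋃₀ U = Set.univ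

/-- Dynamical join `⋁_{j=0}^{n-1} (f_i^j)⁻¹ 𝒰`. -/
def dynJoin {X : Type*} (f : ℕ → X → X) (i : ℕ) (U : Set (Set X)) (n : ℕ) : Set (Set X) :=
  {V | ∃ c : ℕ → Set X, (∀ j < n, c j ∈ U) ∧ V = ⋂ j ∈ Finset.range n, comps f i j ⁻¹' c j}

/-- Upper `s`-entropy of the system started at time `i` w.r.t. the cover `U`, on `K`. -/
def hCover {X : Type*} (f : ℕ → X → X) (i : ℕ) (K : Set X) (U : Set (Set X)) (s : ℝ) : ℝ≥0∞ :=
  Filter.limsup (fun n : ℕ =>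
    ENNReal.ofReal (Real.log ((coverNumOn K (dynJoin f i U n)).toNat)) / (n : ℝ≥0∞) ^ s)
    Filter.atTop

/-- Upper `s`-entropy: supremum over all finite open covers. -/
def hCoverSup {X : Type*} [TopologicalSpace X] (f : ℕ → X → X) (i : ℕ) (K : Set X) (s : ℝ) :
    ℝ≥0∞ :=
  ⨆ U ∈ {U : Set (Set X) | IsFiniteOpenCover U}, hCover f i K U s

/-- Upper classical topological entropy dimension (cover version), in `ℝ≥0∞`. -/
def DbarCover {X : Type*} [TopologicalSpace X] (f : ℕ → X → X) (i : ℕ) (K : Set X) : ℝ≥0∞ :=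
  sInf (ENNReal.ofReal '' {s : ℝ | 0 < s ∧ hCoverSup f i K s = 0})

section Metric
variable {X : Type*} [PseudoMetricSpace X]

/-- `E` is an `(n,ε)`-spanning set of `K`. -/
def IsSpanningSet (f : ℕ → X → X) (K : Set X) (n : ℕ) (ε : ℝ) (E : Set X) : Prop :=
  ∀ y ∈ K, ∃ x ∈ E, ∀ j < n, dist (comps f 1 j y) (comps f 1 j x) ≤ ε

/-- `F` is an `(n,ε)`-separated subset of `K`. -/
def IsSepSet (f : ℕ → X → X) (K : Set X) (n : ℕ) (ε : ℝ) (F : Set X) : Prop :=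
  F ⊆ K ∧ ∀ x ∈ F, ∀ y ∈ F, x ≠ y → ∃ j < n, ε < dist (comps f 1 j x) (comps f 1 j y)

/-- Minimal cardinality of an `(n,ε)`-spanning set of `K`. -/
def spanNum (f : ℕ → X → X) (K : Set X) (n : ℕ) (ε : ℝ) : ℕ :=
  sInf {m : ℕ | ∃ E : Set X, E.Finite ∧ E.ncard = m ∧ IsSpanningSet f K n ε E}

/-- Maximal cardinality of an `(n,ε)`-separated subset of `K`. -/
def sepNum (f : ℕ → X → X) (K : Set X) (n : ℕ) (ε : ℝ) : ℕ :=
  sSup {m : ℕ | ∃ F : Set X, F.Finite ∧ F.ncard = m ∧ IsSepSet f K n ε F}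

/-- Upper `s`-entropy via spanning sets. -/
def hSpan (f : ℕ → X → X) (K : Set X) (s : ℝ) : ℝ≥0∞ :=
  Filter.limsup (fun ε : ℝ =>
    Filter.limsup
      (fun n : ℕ => ENNReal.ofReal (Real.log (spanNum f K n ε : ℝ)) / (n : ℝ≥0∞) ^ s)
      Filter.atTop) (𝓝[>] (0 : ℝ))

/-- Upper `s`-entropy via separated sets. -/
def hSep (f : ℕ → X → X) (K : Set X) (s : ℝ) : ℝ≥0∞ :=
  Filter.limsup (fun ε : ℝ =>
    Filter.limsup
      (fun n : ℕ => ENNReal.ofReal (Real.log (sepNum f K n ε : ℝ)) / (n : ℝ≥0∞) ^ s)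
      Filter.atTop) (𝓝[>] (0 : ℝ))

/-- Lower `s`-entropy via separated sets. -/
def hSepLow (f : ℕ → X → X) (K : Set X) (s : ℝ) : ℝ≥0∞ :=
  Filter.limsup (fun ε : ℝ =>
    Filter.liminf
      (fun n : ℕ => ENNReal.ofReal (Real.log (sepNum f K n ε : ℝ)) / (n : ℝ≥0∞) ^ s)
      Filter.atTop) (𝓝[>] (0 : ℝ))

/-- Upper entropy dimension (spanning-set version). -/
def DbarSpan (f : ℕ → X → X) (K : Set X) : ℝ≥0∞ :=
  sInf (ENNReal.ofReal '' {s : ℝ | 0 < s ∧ hSpan f K s = 0})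

/-- Upper entropy dimension (separated-set version). -/
def DbarSep (f : ℕ → X → X) (K : Set X) : ℝ≥0∞ :=
  sInf (ENNReal.ofReal '' {s : ℝ | 0 < s ∧ hSep f K s = 0})

/-- Lower entropy dimension (separated-set version). -/
def DlowSep (f : ℕ → X → X) (K : Set X) : ℝ≥0∞ :=
  sInf (ENNReal.ofReal '' {s : ℝ | 0 < s ∧ hSepLow f K s = 0})

/-- Diameter of a cover. -/
def covDiam (U : Set (Set X)) : ℝ≥0∞ := ⨆ u ∈ U, EMetric.diam u

end Metric

section Pesin
variable {X : Type*}

/-- The set `X(𝐔)` determined by a string `p = (m, c)`. -/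
def stringSet (f : ℕ → X → X) (p : ℕ × (ℕ → Set X)) : Set X :=
  ⋂ j ∈ Finset.range p.1, comps f 1 j ⁻¹' p.2 j

/-- `G` is a countable collection of strings over `U` of length `≥ N` covering `K`. -/
def IsStringCover (f : ℕ → X → X) (U : Set (Set X)) (K : Set X) (N : ℕ)
    (G : Set (ℕ × (ℕ → Set X))) : Prop :=
  G.Countable ∧ (∀ p ∈ G, N ≤ p.1 ∧ ∀ j < p.1, p.2 j ∈ U) ∧ K ⊆ ⋃ p ∈ G, stringSet f p

/-- The Carathéodory–Pesin pre-measure `M(f,K,s,𝒰,α,N)`. -/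
def pesinM (f : ℕ → X → X) (K : Set X) (s : ℝ) (U : Set (Set X)) (α : ℝ) (N : ℕ) : ℝ≥0∞ :=
  sInf {t : ℝ≥0∞ | ∃ G : Set (ℕ × (ℕ → Set X)), IsStringCover f U K N G ∧
    t = ∑' p : G, ENNReal.ofReal (Real.exp (-α * (p.1.1 : ℝ) ^ s))}

/-- The Carathéodory–Pesin outer measure `m(f,K,s,𝒰,α) = lim_{N→∞} M(f,K,s,𝒰,α,N)`. -/
def pesinOuter (f : ℕ → X → X) (K : Set X) (s : ℝ) (U : Set (Set X)) (α : ℝ) : ℝ≥0∞ :=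
  ⨆ N : ℕ, pesinM f K s U α N

/-- Critical value `D(f,K,s,𝒰)` where `m(f,K,s,𝒰,·)` jumps from `∞` to `0`. -/
def pesinCrit (f : ℕ → X → X) (K : Set X) (s : ℝ) (U : Set (Set X)) : EReal :=
  sInf ((fun α : ℝ => (α : EReal)) '' {α : ℝ | pesinOuter f K s U α = 0})

/-- The Pesin `s`-topological entropy `D(f,K,s)`. -/
def pesinEnt [TopologicalSpace X] (f : ℕ → X → X) (K : Set X) (s : ℝ) : EReal :=
  ⨆ U ∈ {U : Set (Set X) | IsFiniteOpenCover U}, pesinCrit f K s U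

/-- The Pesin topological entropy dimension `D(f,K)`. -/
def pesinDim [TopologicalSpace X] (f : ℕ → X → X) (K : Set X) : ℝ≥0∞ :=
  sInf (ENNReal.ofReal '' {s : ℝ | 0 < s ∧ pesinEnt f K s = 0})

end Pesin

end

section Aux

open Filter Set

variable {X : Type*}

lemma comps_succ_left (f : ℕ → X → X) (i n : ℕ) :
    comps f i (n + 1) = comps f (i + 1) n ∘ f i := by
  induction n with
  | zero => rfl
  | succ n ih =>
    show f (i + (n + 1)) ∘ comps f i (n + 1) = comps f (i + 1) (n + 1) ∘ f i
    rw [ih, show i + (n + 1) = (i + 1) + n from by omega]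
    rfl

lemma comps_continuous [TopologicalSpace X] {f : ℕ → X → X} (hf : ∀ i, Continuous (f i))
    (i n : ℕ) : Continuous (comps f i n) := by
  induction n with
  | zero => exact continuous_id
  | succ n ih => exact (hf _).comp ih

lemma dynJoin_isOpen [TopologicalSpace X] {f : ℕ → X → X} (hf : ∀ i, Continuous (f i))
    {U : Set (Set X)} (hU : IsFiniteOpenCover U) {i n : ℕ} {V : Set X}
    (hV : V ∈ dynJoin f i U n) : IsOpen V := by
  obtain ⟨c, hc, rfl⟩ := hV
  refine isOpen_biInter_finset fun j hj => ?_
  exact (hU.2.1 _ (hc j (Finset.mem_range.1 hj))).preimage (comps_continuous hf i j)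

lemma dynJoin_covers [TopologicalSpace X] {f : ℕ → X → X}
    {U : Set (Set X)} (hU : IsFiniteOpenCover U) (i n : ℕ) :
    ⋃₀ dynJoin f i U n = Set.univ := by
  refine Set.eq_univ_of_forall fun x => ?_
  have hex : ∀ y : X, ∃ u ∈ U, y ∈ u := by
    intro y
    have : y ∈ ⋃₀ U := hU.2.2 ▸ Set.mem_univ y
    simpa [Set.mem_sUnion] using this
  choose u huU hyu using hex
  refine ⟨⋂ j ∈ Finset.range n, comps f i j ⁻¹' u (comps f i j x), ?_, ?_⟩
  · exact ⟨fun j => u (comps f i j x), fun j _ => huU _, rfl⟩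
  · exact Set.mem_iInter₂.2 fun j _ => hyu _

lemma inter_preimage_mem_dynJoin {f : ℕ → X → X} {U : Set (Set X)} {i n : ℕ} {c V : Set X}
    (hc : c ∈ U) (hV : V ∈ dynJoin f (i + 1) U n) :
    c ∩ f i ⁻¹' V ∈ dynJoin f i U (n + 1) := by
  obtain ⟨d, hd, rfl⟩ := hV
  refine ⟨fun j => Nat.casesOn j c d, fun j hj => ?_, ?_⟩
  · cases j with
    | zero => exact hc
    | succ j => exact hd j (by omega)
  · ext x
    simp only [Set.mem_inter_iff, Set.mem_preimage, Set.mem_iInter, Finset.mem_range]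
    constructor
    · rintro ⟨hxc, hxV⟩ j hj
      cases j with
      | zero => exact hxc
      | succ j =>
        have := hxV
        show x ∈ comps f i (j + 1) ⁻¹' d j
        rw [comps_succ_left]
        exact this j (by omega)
    · intro h
      refine ⟨h 0 (by omega), fun j hjn => ?_⟩
      have h2 := h (j + 1) (by omega)
      rw [comps_succ_left] at h2
      exact h2

lemma coverNumOn_mem {K : Set X} {A : Set (Set X)}
    (h : ∃ F ⊆ A, F.Finite ∧ K ⊆ ⋃₀ F) :
    ∃ F ⊆ A, F.Finite ∧ ((F.ncard : ℕ∞) = coverNumOn K A) ∧ K ⊆ ⋃₀ F := by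
  have hne : {n : ℕ∞ | ∃ F ⊆ A, F.Finite ∧ (F.ncard : ℕ∞) = n ∧ K ⊆ ⋃₀ F}.Nonempty := by
    obtain ⟨F, hFA, hFfin, hFcov⟩ := h
    exact ⟨(F.ncard : ℕ∞), F, hFA, hFfin, rfl, hFcov⟩
  have := csInf_mem hne
  obtain ⟨F, hFA, hFfin, hFcard, hFcov⟩ := this
  exact ⟨F, hFA, hFfin, hFcard, hFcov⟩

lemma exists_finite_subcover [TopologicalSpace X] [CompactSpace X] {f : ℕ → X → X}
    (hf : ∀ i, Continuous (f i)) {U : Set (Set X)} (hU : IsFiniteOpenCover U)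
    (K : Set X) (i n : ℕ) :
    ∃ F ⊆ dynJoin f i U n, F.Finite ∧ K ⊆ ⋃₀ F := by
  have hcov : (Set.univ : Set X) ⊆ ⋃ u ∈ dynJoin f i U n, u := by
    rw [← Set.sUnion_eq_biUnion, dynJoin_covers hU i n]
  obtain ⟨F, hFA, hFfin, hFcov⟩ := isCompact_univ.elim_finite_subcover_image
    (fun u hu => dynJoin_isOpen hf hU hu) hcov
  refine ⟨F, hFA, hFfin, ?_⟩
  calc K ⊆ Set.univ := Set.subset_univ K
    _ ⊆ ⋃ u ∈ F, u := hFcov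
    _ = ⋃₀ F := (Set.sUnion_eq_biUnion).symm

lemma coverNumOn_ne_top [TopologicalSpace X] [CompactSpace X] {f : ℕ → X → X}
    (hf : ∀ i, Continuous (f i)) {U : Set (Set X)} (hU : IsFiniteOpenCover U)
    (K : Set X) (i n : ℕ) : coverNumOn K (dynJoin f i U n) ≠ ⊤ := by
  obtain ⟨F, hFA, hFfin, hFcov⟩ := exists_finite_subcover hf hU K i n
  have : coverNumOn K (dynJoin f i U n) ≤ (F.ncard : ℕ∞) :=
    sInf_le ⟨F, hFA, hFfin, rfl, hFcov⟩
  exact fun h => by simp [h] at this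

lemma one_le_coverNumOn {K : Set X} (hK : K.Nonempty) (A : Set (Set X)) :
    1 ≤ coverNumOn K A := by
  refine le_sInf fun n hn => ?_
  obtain ⟨F, hFA, hFfin, rfl, hFcov⟩ := hn
  obtain ⟨x, hx⟩ := hK
  obtain ⟨u, huF, -⟩ := hFcov hx
  have : 0 < F.ncard := (Set.ncard_pos hFfin).2 ⟨u, huF⟩
  exact_mod_cast this

lemma coverNumOn_step [TopologicalSpace X] [CompactSpace X] {f : ℕ → X → X}
    (hf : ∀ i, Continuous (f i)) {U : Set (Set X)} (hU : IsFiniteOpenCover U)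
    {K : Set X} {i : ℕ} (hi : 1 ≤ i) (hinv : f i ⁻¹' K = K) (n : ℕ) :
    coverNumOn K (dynJoin f i U (n + 1)) ≤
      (U.ncard : ℕ∞) * coverNumOn K (dynJoin f (i + 1) U n) := by
  classical
  obtain ⟨F', hF'A, hF'fin, hF'card, hF'cov⟩ :=
    coverNumOn_mem (exists_finite_subcover hf hU K (i + 1) n)
  set A := hU.1.toFinset with hA
  set B := hF'fin.toFinset with hB
  set G := (A ×ˢ B).image (fun p : Set X × Set X => p.1 ∩ f i ⁻¹' p.2) with hG
  have hGsub : (G : Set (Set X)) ⊆ dynJoin f i U (n + 1) := by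
    intro V hV
    simp only [hG, Finset.coe_image, Set.mem_image, Finset.mem_coe, Finset.mem_product] at hV
    obtain ⟨⟨c, W⟩, ⟨hcA, hWB⟩, rfl⟩ := hV
    have hcU : c ∈ U := by rwa [hA, Set.Finite.mem_toFinset] at hcA
    have hWF : W ∈ F' := by rwa [hB, Set.Finite.mem_toFinset] at hWB
    exact inter_preimage_mem_dynJoin hcU (hF'A hWF)
  have hGcov : K ⊆ ⋃₀ (G : Set (Set X)) := by
    intro x hx
    have hxU : ∃ c ∈ U, x ∈ c := by
      have : x ∈ ⋃₀ U := hU.2.2 ▸ Set.mem_univ x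
      simpa [Set.mem_sUnion] using this
    obtain ⟨c, hcU, hxc⟩ := hxU
    have hfx : f i x ∈ K := by rw [← hinv] at hx; exact hx
    obtain ⟨W, hWF, hfxW⟩ := hF'cov hfx
    refine ⟨c ∩ f i ⁻¹' W, ?_, hxc, hfxW⟩
    simp only [hG, Finset.coe_image, Set.mem_image, Finset.mem_coe, Finset.mem_product]
    exact ⟨(c, W), ⟨(hU.1.mem_toFinset).2 hcU, (hF'fin.mem_toFinset).2 hWF⟩, rfl⟩
  have hcard : G.card ≤ U.ncard * F'.ncard := by
    calc G.card ≤ (A ×ˢ B).card := Finset.card_image_le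
      _ = A.card * B.card := Finset.card_product _ _
      _ = U.ncard * F'.ncard := by
        rw [hA, hB, ← Set.ncard_coe_finset, ← Set.ncard_coe_finset,
          Set.Finite.coe_toFinset, Set.Finite.coe_toFinset]
  have h1 : coverNumOn K (dynJoin f i U (n + 1)) ≤ ((G : Set (Set X)).ncard : ℕ∞) :=
    sInf_le ⟨(G : Set (Set X)), hGsub, G.finite_toSet, rfl, hGcov⟩
  calc coverNumOn K (dynJoin f i U (n + 1)) ≤ ((G : Set (Set X)).ncard : ℕ∞) := h1
    _ = (G.card : ℕ∞) := by rw [Set.ncard_coe_finset]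
    _ ≤ ((U.ncard * F'.ncard : ℕ) : ℕ∞) := by exact_mod_cast hcard
    _ = (U.ncard : ℕ∞) * (F'.ncard : ℕ∞) := by push_cast; ring
    _ = (U.ncard : ℕ∞) * coverNumOn K (dynJoin f (i + 1) U n) := by rw [hF'card]

lemma limsup_add_left_zero {u v : ℕ → ℝ≥0∞} (hu : Tendsto u atTop (𝓝 0)) :
    Filter.limsup (fun n => u n + v n) Filter.atTop ≤ Filter.limsup v Filter.atTop := by
  refine ENNReal.le_of_forall_pos_le_add fun ε hε _ => ?_
  have hev : ∀ᶠ n in atTop, u n + v n ≤ v n + (ε : ℝ≥0∞) := by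
    filter_upwards [hu.eventually_le_const (by exact_mod_cast hε : (0 : ℝ≥0∞) < ε)] with n hn
    calc u n + v n ≤ (ε : ℝ≥0∞) + v n := add_le_add_left hn _
      _ = v n + ε := add_comm _ _
  calc Filter.limsup (fun n => u n + v n) Filter.atTop
      ≤ Filter.limsup (fun n => v n + (ε : ℝ≥0∞)) Filter.atTop := limsup_le_limsup hev
    _ = Filter.limsup v Filter.atTop + ε :=
        limsup_add_const atTop v (ε : ℝ≥0∞) (by isBoundedDefault) (by isBoundedDefault)

lemma tendsto_const_div_rpow_zero {C : ℝ≥0∞} (hC : C ≠ ⊤) {s : ℝ} (hs : 0 < s) :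
    Tendsto (fun n : ℕ => C / (((n + 1 : ℕ) : ℝ≥0∞)) ^ s) atTop (𝓝 0) := by
  have h1 : Tendsto (fun n : ℕ => (((n + 1 : ℕ)) : ℝ≥0∞)) atTop (𝓝 ⊤) :=
    ENNReal.tendsto_nat_nhds_top.comp (tendsto_add_atTop_nat 1)
  have h2 : Tendsto (fun n : ℕ => (((n + 1 : ℕ)) : ℝ≥0∞) ^ s) atTop (𝓝 ⊤) := by
    have hc := (ENNReal.continuous_rpow_const (y := s)).tendsto ⊤
    rw [ENNReal.top_rpow_of_pos hs] at hc
    exact hc.comp h1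
  have h3 : Tendsto (fun n : ℕ => ((((n + 1 : ℕ)) : ℝ≥0∞) ^ s)⁻¹) atTop (𝓝 0) := by
    have := ENNReal.tendsto_inv_iff.2 h2
    simpa using this
  have h4 := ENNReal.Tendsto.const_mul h3 (Or.inr hC)
  simpa [div_eq_mul_inv] using h4

lemma hCover_le_succ [TopologicalSpace X] [CompactSpace X] {f : ℕ → X → X}
    (hf : ∀ i, Continuous (f i)) {K : Set X} (hK : K.Nonempty)
    {U : Set (Set X)} (hU : IsFiniteOpenCover U)
    {i : ℕ} (hi : 1 ≤ i) (hinv : f i ⁻¹' K = K) {s : ℝ} (hs : 0 < s) :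
    hCover f i K U s ≤ hCover f (i + 1) K U s := by
  set a : ℕ → ℕ → ℕ := fun k n => (coverNumOn K (dynJoin f k U n)).toNat with ha
  have hpos : ∀ k n, 1 ≤ a k n := by
    intro k n
    have h1 := one_le_coverNumOn hK (dynJoin f k U n)
    have h2 := coverNumOn_ne_top hf hU K k n
    have := ENat.toNat_le_toNat h1 h2
    simpa using this
  have hUne : U.Nonempty := by
    by_contra h
    rw [Set.not_nonempty_iff_eq_empty] at h
    have h2 := hU.2.2
    rw [h, Set.sUnion_empty] at h2
    exact (h2 ▸ Set.mem_univ hK.choose : hK.choose ∈ (∅ : Set X))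
  have hc1 : 1 ≤ U.ncard := (Set.ncard_pos hU.1).2 hUne
  have hstep : ∀ n, a i (n + 1) ≤ U.ncard * a (i + 1) n := by
    intro n
    have h := coverNumOn_step hf hU hi hinv (K := K) n
    have hne := coverNumOn_ne_top hf hU K (i + 1) n
    rw [← ENat.coe_toNat hne] at h
    have h' : coverNumOn K (dynJoin f i U (n + 1)) ≤ ((U.ncard * a (i + 1) n : ℕ) : ℕ∞) := by
      rw [Nat.cast_mul]; exact h
    exact ENat.toNat_le_of_le_coe h'
  -- the sequences
  set g : ℕ → ℕ → ℝ≥0∞ :=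
    fun k n => ENNReal.ofReal (Real.log (a k n)) / ((n : ℝ≥0∞)) ^ s with hg
  have hcov_eq : ∀ k, hCover f k K U s = Filter.limsup (g k) Filter.atTop := fun k => rfl
  set C : ℝ≥0∞ := ENNReal.ofReal (Real.log (U.ncard)) with hC
  have key : ∀ n : ℕ, g i (n + 1) ≤ C / (((n + 1 : ℕ) : ℝ≥0∞)) ^ s + g (i + 1) n := by
    intro n
    have hlog : Real.log (a i (n + 1)) ≤ Real.log (U.ncard) + Real.log (a (i + 1) n) := by
      have hq : (0 : ℝ) < (a (i + 1) n : ℝ) := by exact_mod_cast hpos (i + 1) n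
      have hcpos : (0 : ℝ) < (U.ncard : ℝ) := by exact_mod_cast hc1
      rw [← Real.log_mul (ne_of_gt hcpos) (ne_of_gt hq)]
      apply Real.log_le_log (by exact_mod_cast hpos i (n + 1))
      exact_mod_cast hstep n
    have hnum : ENNReal.ofReal (Real.log (a i (n + 1))) ≤
        C + ENNReal.ofReal (Real.log (a (i + 1) n)) := by
      calc ENNReal.ofReal (Real.log (a i (n + 1)))
          ≤ ENNReal.ofReal (Real.log (U.ncard) + Real.log (a (i + 1) n)) :=
            ENNReal.ofReal_le_ofReal hlog
        _ ≤ C + ENNReal.ofReal (Real.log (a (i + 1) n)) := ENNReal.ofReal_add_le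
    have hden : ((n : ℝ≥0∞)) ^ s ≤ (((n + 1 : ℕ) : ℝ≥0∞)) ^ s := by
      apply ENNReal.rpow_le_rpow _ hs.le
      exact_mod_cast Nat.le_succ n
    calc g i (n + 1)
        = ENNReal.ofReal (Real.log (a i (n + 1))) / (((n + 1 : ℕ) : ℝ≥0∞)) ^ s := rfl
      _ ≤ (C + ENNReal.ofReal (Real.log (a (i + 1) n))) / (((n + 1 : ℕ) : ℝ≥0∞)) ^ s :=
          ENNReal.div_le_div_right hnum _
      _ = C / (((n + 1 : ℕ) : ℝ≥0∞)) ^ s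
            + ENNReal.ofReal (Real.log (a (i + 1) n)) / (((n + 1 : ℕ) : ℝ≥0∞)) ^ s :=
          ENNReal.add_div
      _ ≤ C / (((n + 1 : ℕ) : ℝ≥0∞)) ^ s + g (i + 1) n :=
          add_le_add_right (ENNReal.div_le_div_left hden _) _
  have hshift : Filter.limsup (g i) Filter.atTop
      = Filter.limsup (fun n => g i (n + 1)) Filter.atTop :=
    (Filter.limsup_nat_add (g i) 1).symm
  have hbound : Filter.limsup (fun n => g i (n + 1)) Filter.atTop
      ≤ Filter.limsup (fun n => C / (((n + 1 : ℕ) : ℝ≥0∞)) ^ s + g (i + 1) n) Filter.atTop :=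
    Filter.limsup_le_limsup (Filter.Eventually.of_forall key)
  have hzero := limsup_add_left_zero (v := g (i + 1))
    (tendsto_const_div_rpow_zero (C := C) ENNReal.ofReal_ne_top hs)
  rw [hcov_eq i, hcov_eq (i + 1), hshift]
  exact hbound.trans hzero

end Aux


/-- Monotonicity of shifted systems on an invariant set:
`h̄_K(f_{i,∞},s) ≤ h̄_K(f_{i+1,∞},s)` and `D̄_K(f_{i,∞}) ≤ D̄_K(f_{j,∞})` for `i ≤ j`. -/
theorem shifted_systems_mono {X : Type*} [TopologicalSpace X] [CompactSpace X] (f : ℕ → X → X)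
    (hf : ∀ i, Continuous (f i)) (K : Set X) (hK : K.Nonempty)
    (hinv : ∀ i, 1 ≤ i → f i ⁻¹' K = K) :
    (∀ i, 1 ≤ i → ∀ s : ℝ, 0 < s → hCoverSup f i K s ≤ hCoverSup f (i + 1) K s) ∧
      ∀ i j, 1 ≤ i → i ≤ j → DbarCover f i K ≤ DbarCover f j K := by
  have main : ∀ i, 1 ≤ i → ∀ s : ℝ, 0 < s → hCoverSup f i K s ≤ hCoverSup f (i + 1) K s := by
    intro i hi s hs
    refine iSup₂_le fun U hU => ?_
    calc hCover f i K U s ≤ hCover f (i + 1) K U s :=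
          hCover_le_succ hf hK hU hi (hinv i hi) hs
      _ ≤ hCoverSup f (i + 1) K s := le_iSup₂ (f := fun U _ => hCover f (i + 1) K U s) U hU
  refine ⟨main, fun i j hi hij => ?_⟩
  have mono : ∀ s : ℝ, 0 < s → hCoverSup f i K s ≤ hCoverSup f j K s := by
    intro s hs
    induction j, hij using Nat.le_induction with
    | base => exact le_rfl
    | succ k hk ih => exact ih.trans (main k (hi.trans hk) s hs)
  apply sInf_le_sInf
  apply Set.image_mono
  rintro s ⟨hs, hzero⟩
  exact ⟨hs, le_antisymm (hzero ▸ mono s hs) zero_le⟩
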